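/- (Star duality for 𝒜-finite multiple zeta-star values, Hoffman, Jarossay.) For every element w of 𝔥y, one has Z_𝒜⋆(w) = −Z_𝒜⋆(α̃(w)). -/

import Mathlib

noncomputable section

namespace FMZVNote

/-- The noncommutative polynomial ring `𝔥 = ℚ⟨x,y⟩` in two indeterminates `x`, `y`. -/
abbrev H : Type := FreeAlgebra ℚ (Fin 2)

/-- The generator `x`. -/
def x : H := FreeAlgebra.ι ℚ 0

/-- The generator `y`. -/
def y : H := FreeAlgebra.ι ℚ 1

/-- `z = x + y`. -/
def z : H := x + y

/-- `z_k = x^{k-1} y`. -/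
def zk (k : ℕ) : H := x ^ (k - 1) * y

/-- The word `z_{k_1} ⋯ z_{k_r}` associated to an index `(k_1, …, k_r)`. -/
def zword (ks : List ℕ) : H := (ks.map zk).prod

/-- The ideal `⊕_p ℤ/pℤ` of finitely supported elements of `∏_p ℤ/pℤ`. -/
def finSupportIdeal : Ideal (∀ p : Nat.Primes, ZMod p) where
  carrier := {f | {p : Nat.Primes | f p ≠ 0}.Finite}
  zero_mem' := by simp
  add_mem' := by
    intro a b ha hb
    refine (ha.union hb).subset ?_
    intro p hp
    simp only [Set.mem_setOf_eq, Set.mem_union]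
    by_contra h
    push_neg at h
    exact hp (by simp [h.1, h.2])
  smul_mem' := by
    intro c f hf
    refine hf.subset ?_
    intro p hp
    simp only [Set.mem_setOf_eq] at hp ⊢
    intro h
    exact hp (by simp [h])

/-- The ring `𝒜 = (∏_p ℤ/pℤ)/(⊕_p ℤ/pℤ)`, where `p` runs over all primes. -/
abbrev Acal : Type := (∀ p : Nat.Primes, ZMod p) ⧸ finSupportIdeal

theorem Acal.isUnit_intCast (n : ℤ) (hn : n ≠ 0) : IsUnit ((n : ℤ) : Acal) := by
  refine IsUnit.of_mul_eq_one
    (Ideal.Quotient.mk finSupportIdeal fun p => ((n : ZMod p))⁻¹) ?_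
  have h1 : ((n : ℤ) : Acal)
      = Ideal.Quotient.mk finSupportIdeal (fun p => ((n : ZMod p))) := by
    rw [← map_intCast (Ideal.Quotient.mk finSupportIdeal) n]
    rfl
  rw [h1, ← map_mul, ← map_one (Ideal.Quotient.mk finSupportIdeal), Ideal.Quotient.eq]
  have hfin : {p : Nat.Primes | ((n : ZMod (p : ℕ))) = 0}.Finite := by
    have hsub : {p : Nat.Primes | ((n : ZMod (p : ℕ))) = 0} ⊆
        (fun p : Nat.Primes => (p : ℕ)) ⁻¹' (Set.Iic n.natAbs) := by
      intro p hp
      simp only [Set.mem_setOf_eq] at hp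
      haveI : NeZero (p : ℕ) := ⟨p.2.ne_zero⟩
      rw [ZMod.intCast_zmod_eq_zero_iff_dvd] at hp
      have hd : (p : ℕ) ∣ n.natAbs := by
        have := Int.natAbs_dvd_natAbs.mpr hp
        simpa using this
      exact Nat.le_of_dvd (Int.natAbs_pos.mpr hn) hd
    exact ((Set.finite_Iic _).preimage
      (fun a _ b _ h => Subtype.ext h)).subset hsub
  refine hfin.subset ?_
  intro p hp
  simp only [Set.mem_setOf_eq] at hp ⊢
  by_contra h
  apply hp
  haveI : Fact (p : ℕ).Prime := ⟨p.2⟩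
  simp [mul_inv_cancel₀ h]

/-- Every nonzero integer is invertible in `𝒜`, so `𝒜` is a `ℚ`-algebra. -/
instance : Algebra ℚ Acal :=
  (IsLocalization.lift (M := nonZeroDivisors ℤ) (S := ℚ)
    (g := Int.castRingHom Acal)
    (fun v => Acal.isUnit_intCast v.1 (nonZeroDivisors.ne_zero v.2))).toAlgebra

instance : Module ℚ Acal := Algebra.toModule

/-- The finite multiple zeta-star value `ζ_𝒜⋆(k_1,…,k_r)`, the class in `𝒜` of the tuple
`(Σ_{p>n_1≥⋯≥n_r≥1} 1/(n_1^{k_1}⋯n_r^{k_r}) mod p)_p`. -/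
def zetaAStar (k : List ℕ) : Acal :=
  Ideal.Quotient.mk finSupportIdeal fun p =>
    ∑ n : Fin k.length → Fin p,
      if (∀ i, 0 < (n i : ℕ)) ∧
          (∀ i j : Fin k.length, i < j → (n j : ℕ) ≤ (n i : ℕ)) then
        ∏ i, ((((n i : ℕ) : ZMod p)) ^ k.get i)⁻¹
      else 0

/-- The automorphism `α` of `𝔥` interchanging `x` and `y`. -/
def alphaHom : H →ₐ[ℚ] H := FreeAlgebra.lift ℚ ![y, x]


open Finset


section core
variable (p : ℕ)

/-- Partial sum `∑_{m=1}^N f m`. -/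
def Psm (f : ℕ → ZMod p) (N : ℕ) : ZMod p := ∑ m ∈ Finset.Icc 1 N, f m

/-- Signed binomial transform `∑_{m=1}^N (-1)^{m+1} C(N,m) f m`. -/
def Tsm (f : ℕ → ZMod p) (N : ℕ) : ZMod p :=
  ∑ m ∈ Finset.Icc 1 N, (-1 : ZMod p) ^ (m + 1) * (N.choose m : ZMod p) * f m

def phiW : List Bool → ℕ → ZMod p
  | [], m => (m : ZMod p)⁻¹
  | false :: s, m => (m : ZMod p)⁻¹ * phiW s m
  | true :: s, m => (m : ZMod p)⁻¹ * Psm p (phiW s) m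

def Nnest : List ℕ → ℕ → ZMod p
  | [], _ => 1
  | k :: ks, b => ∑ m ∈ Finset.Icc 1 b, ((m : ZMod p) ^ k)⁻¹ * Nnest ks m

/-- double sum swap over the triangle `a ≤ m ≤ M ≤ N` -/
lemma sum_Icc_swap (a N : ℕ) (f : ℕ → ℕ → ZMod p) :
    ∑ M ∈ Icc a N, ∑ m ∈ Icc a M, f m M = ∑ m ∈ Icc a N, ∑ M ∈ Icc m N, f m M := by
  have h1 : ∀ M ∈ Icc a N, ∑ m ∈ Icc a M, f m M
      = ∑ m ∈ Icc a N, if m ≤ M then f m M else 0 := by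
    intro M hM
    rw [mem_Icc] at hM
    rw [← Finset.sum_filter]
    congr 1
    ext m
    simp only [mem_filter, mem_Icc]
    omega
  have h2 : ∀ m ∈ Icc a N, ∑ M ∈ Icc m N, f m M
      = ∑ M ∈ Icc a N, if m ≤ M then f m M else 0 := by
    intro m hm
    rw [mem_Icc] at hm
    rw [← Finset.sum_filter]
    congr 1
    ext M
    simp only [mem_filter, mem_Icc]
    omega
  rw [Finset.sum_congr rfl h1, Finset.sum_congr rfl h2, Finset.sum_comm]

lemma hockey (m : ℕ) (hm : 1 ≤ m) :
    ∀ N, m ≤ N → ∑ M ∈ Icc m N, ((M - 1).choose (m - 1) : ℕ) = N.choose m := by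
  refine Nat.le_induction ?_ ?_
  · rw [Finset.Icc_self, Finset.sum_singleton, Nat.choose_self, Nat.choose_self]
  · intro N hN ih
    rw [Finset.sum_Icc_succ_top (by omega), ih]
    obtain ⟨m', rfl⟩ : ∃ m', m = m' + 1 := ⟨m - 1, by omega⟩
    simp only [Nat.add_sub_cancel]
    rw [show (N + 1).choose (m' + 1) = N.choose m' + N.choose (m' + 1)
      from Nat.choose_succ_succ N m']
    omega

variable [hp : Fact p.Prime]

lemma cast_ne_zero {m : ℕ} (h1 : 1 ≤ m) (h2 : m ≤ p - 1) : (m : ZMod p) ≠ 0 := by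
  haveI : NeZero p := ⟨hp.out.ne_zero⟩
  rw [Ne, ZMod.natCast_eq_zero_iff]
  intro hd
  have := Nat.le_of_dvd (by omega) hd
  have := hp.out.two_le
  omega

/-- `M⁻¹ C(M,m) = m⁻¹ C(M-1,m-1)` in `ZMod p` for `1 ≤ m ≤ M ≤ p-1`. -/
lemma keyMN {m M : ℕ} (hm : 1 ≤ m) (hmM : m ≤ M) (hM : M ≤ p - 1) :
    (M : ZMod p)⁻¹ * (M.choose m : ZMod p)
      = (m : ZMod p)⁻¹ * (((M - 1).choose (m - 1) : ℕ) : ZMod p) := by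
  have hMn : (M : ZMod p) ≠ 0 := cast_ne_zero p (by omega) hM
  have hmn : (m : ZMod p) ≠ 0 := cast_ne_zero p hm (by omega)
  obtain ⟨m0, rfl⟩ : ∃ m0, m = m0 + 1 := ⟨m - 1, by omega⟩
  obtain ⟨M0, rfl⟩ : ∃ M0, M = M0 + 1 := ⟨M - 1, by omega⟩
  simp only [Nat.add_sub_cancel]
  have hnat : (M0 + 1) * M0.choose m0 = (M0 + 1).choose (m0 + 1) * (m0 + 1) :=
    Nat.add_one_mul_choose_eq M0 m0
  rw [inv_mul_eq_div, inv_mul_eq_div, div_eq_div_iff hMn hmn]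
  exact_mod_cast congrArg (Nat.cast : ℕ → ZMod p) (hnat.symm.trans (Nat.mul_comm _ _))

lemma alt_range (M : ℕ) (hM : 1 ≤ M) (j : ℕ) :
    ∑ m ∈ range (j + 1), (-1 : ZMod p) ^ m * (M.choose m : ZMod p)
      = (-1) ^ j * (((M - 1).choose j : ℕ) : ZMod p) := by
  obtain ⟨M0, rfl⟩ : ∃ M0, M = M0 + 1 := ⟨M - 1, by omega⟩
  simp only [Nat.add_sub_cancel]
  induction j with
  | zero => simp
  | succ j ih =>
    rw [Finset.sum_range_succ, ih]
    rw [show (M0 + 1).choose (j + 1) = M0.choose j + M0.choose (j + 1)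
      from Nat.choose_succ_succ M0 j]
    push_cast
    ring

lemma altsum {k M : ℕ} (hk : 1 ≤ k) (hkM : k ≤ M) :
    ∑ m ∈ Icc k M, (-1 : ZMod p) ^ (m + 1) * (M.choose m : ZMod p)
      = (-1) ^ (k + 1) * (((M - 1).choose (k - 1) : ℕ) : ZMod p) := by
  obtain ⟨k', rfl⟩ : ∃ k', k = k' + 1 := ⟨k - 1, by omega⟩
  simp only [Nat.add_sub_cancel]
  have hsplit : ∑ m ∈ range (M + 1), (-1 : ZMod p) ^ m * (M.choose m : ZMod p)
      = (∑ m ∈ range (k' + 1), (-1 : ZMod p) ^ m * (M.choose m : ZMod p))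
        + ∑ m ∈ Icc (k' + 1) M, (-1 : ZMod p) ^ m * (M.choose m : ZMod p) := by
    rw [Finset.range_eq_Ico, Finset.range_eq_Ico, ← Finset.Ico_add_one_right_eq_Icc]
    exact (Finset.sum_Ico_consecutive (fun m => (-1 : ZMod p) ^ m * (M.choose m : ZMod p)) (m := 0) (n := k' + 1) (k := M + 1) (by omega) (by omega)).symm
  have h1 := alt_range p M (by omega) M
  have h2 := alt_range p M (by omega) k'
  have hz : ((M - 1).choose M : ℕ) = 0 := Nat.choose_eq_zero_of_lt (by omega)
  rw [hz, Nat.cast_zero, mul_zero] at h1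
  have hIcc : ∑ m ∈ Icc (k' + 1) M, (-1 : ZMod p) ^ m * (M.choose m : ZMod p)
      = - ((-1) ^ k' * (((M - 1).choose k' : ℕ) : ZMod p)) := by
    have h3 := hsplit
    rw [h1, h2] at h3
    linear_combination -h3
  have hstep : ∑ m ∈ Icc (k' + 1) M, (-1 : ZMod p) ^ (m + 1) * (M.choose m : ZMod p)
      = - ∑ m ∈ Icc (k' + 1) M, (-1 : ZMod p) ^ m * (M.choose m : ZMod p) := by
    rw [← Finset.sum_neg_distrib]
    exact Finset.sum_congr rfl fun m _ => by ring
  rw [hstep, hIcc]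
  ring

end core

section part2
variable (p : ℕ) [hp : Fact p.Prime]

lemma sumC1 {m N : ℕ} (hm : 1 ≤ m) (hmN : m ≤ N) (hN : N ≤ p - 1) :
    ∑ M ∈ Icc m N, (M : ZMod p)⁻¹ * (M.choose m : ZMod p)
      = (m : ZMod p)⁻¹ * (N.choose m : ZMod p) := by
  have h1 : ∀ M ∈ Icc m N, (M : ZMod p)⁻¹ * (M.choose m : ZMod p)
      = (m : ZMod p)⁻¹ * (((M - 1).choose (m - 1) : ℕ) : ZMod p) := by
    intro M hM
    rw [mem_Icc] at hM
    exact keyMN p hm hM.1 (le_trans hM.2 hN)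
  rw [Finset.sum_congr rfl h1, ← Finset.mul_sum, ← Nat.cast_sum, hockey m hm N hmN]

lemma lemL1 (f : ℕ → ZMod p) {N : ℕ} (hN : N ≤ p - 1) :
    Tsm p (fun m => (m : ZMod p)⁻¹ * f m) N
      = ∑ M ∈ Icc 1 N, (M : ZMod p)⁻¹ * Tsm p f M := by
  unfold Tsm
  have h1 : ∀ M ∈ Icc 1 N, (M : ZMod p)⁻¹
        * ∑ m ∈ Icc 1 M, (-1 : ZMod p) ^ (m + 1) * (M.choose m : ZMod p) * f m
      = ∑ m ∈ Icc 1 M, (-1 : ZMod p) ^ (m + 1) * f m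
          * ((M : ZMod p)⁻¹ * (M.choose m : ZMod p)) := by
    intro M hM
    rw [Finset.mul_sum]
    exact Finset.sum_congr rfl fun m _ => by ring
  rw [Finset.sum_congr rfl h1, sum_Icc_swap]
  refine Finset.sum_congr rfl fun m hm => ?_
  rw [mem_Icc] at hm
  rw [← Finset.mul_sum, sumC1 p hm.1 hm.2 hN]
  ring

lemma Tdiff (f : ℕ → ZMod p) (M0 : ℕ) :
    Tsm p f (M0 + 1) - Tsm p f M0
      = ∑ m ∈ Icc 1 (M0 + 1), (-1 : ZMod p) ^ (m + 1) * ((M0.choose (m - 1) : ℕ) : ZMod p) * f m := by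
  unfold Tsm
  have h1 : ∀ m ∈ Icc 1 (M0 + 1), (-1 : ZMod p) ^ (m + 1) * ((M0 + 1).choose m : ZMod p) * f m
      = (-1 : ZMod p) ^ (m + 1) * ((M0.choose (m - 1) : ℕ) : ZMod p) * f m
        + (-1 : ZMod p) ^ (m + 1) * ((M0.choose m : ℕ) : ZMod p) * f m := by
    intro m hm
    rw [mem_Icc] at hm
    obtain ⟨m', rfl⟩ : ∃ m', m = m' + 1 := ⟨m - 1, by omega⟩
    rw [show (M0 + 1).choose (m' + 1) = M0.choose m' + M0.choose (m' + 1)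
      from Nat.choose_succ_succ M0 m']
    simp only [Nat.add_sub_cancel]
    push_cast
    ring
  rw [Finset.sum_congr rfl h1, Finset.sum_add_distrib]
  have h2 : ∑ m ∈ Icc 1 (M0 + 1), (-1 : ZMod p) ^ (m + 1) * ((M0.choose m : ℕ) : ZMod p) * f m
      = ∑ m ∈ Icc 1 M0, (-1 : ZMod p) ^ (m + 1) * ((M0.choose m : ℕ) : ZMod p) * f m := by
    rw [Finset.sum_Icc_succ_top (by omega)]
    rw [Nat.choose_eq_zero_of_lt (by omega)]
    push_cast
    ring
  rw [h2]
  ring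

lemma sumC2 {k N : ℕ} (hk : 1 ≤ k) (hkN : k ≤ N) (hN : N ≤ p - 1) :
    ∑ m ∈ Icc k N, (-1 : ZMod p) ^ (m + 1) * (N.choose m : ZMod p) * (m : ZMod p)⁻¹
      = (-1) ^ (k + 1)
        * ∑ M ∈ Icc k N, (M : ZMod p)⁻¹ * (((M - 1).choose (k - 1) : ℕ) : ZMod p) := by
  have h1 : ∀ m ∈ Icc k N, (-1 : ZMod p) ^ (m + 1) * (N.choose m : ZMod p) * (m : ZMod p)⁻¹
      = ∑ M ∈ Icc m N, (-1 : ZMod p) ^ (m + 1) * (m : ZMod p)⁻¹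
          * (((M - 1).choose (m - 1) : ℕ) : ZMod p) := by
    intro m hm
    rw [mem_Icc] at hm
    rw [← Finset.mul_sum, ← Nat.cast_sum, hockey m (by omega) N hm.2]
    ring
  rw [Finset.sum_congr rfl h1, ← sum_Icc_swap]
  have h2 : ∀ M ∈ Icc k N, ∑ m ∈ Icc k M, (-1 : ZMod p) ^ (m + 1) * (m : ZMod p)⁻¹
        * (((M - 1).choose (m - 1) : ℕ) : ZMod p)
      = (M : ZMod p)⁻¹ * ((-1) ^ (k + 1) * (((M - 1).choose (k - 1) : ℕ) : ZMod p)) := by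
    intro M hM
    rw [mem_Icc] at hM
    have h3 : ∀ m ∈ Icc k M, (-1 : ZMod p) ^ (m + 1) * (m : ZMod p)⁻¹
          * (((M - 1).choose (m - 1) : ℕ) : ZMod p)
        = (M : ZMod p)⁻¹ * ((-1 : ZMod p) ^ (m + 1) * (M.choose m : ZMod p)) := by
      intro m hm
      rw [mem_Icc] at hm
      linear_combination ((-1 : ZMod p) ^ (m + 1))
        * (keyMN p (show 1 ≤ m by omega) hm.2 (le_trans hM.2 hN)).symm
    rw [Finset.sum_congr rfl h3, ← Finset.mul_sum, altsum p (by omega) (by omega)]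
  rw [Finset.sum_congr rfl h2, Finset.mul_sum]
  exact Finset.sum_congr rfl fun M _ => by ring

lemma lemL2 (f : ℕ → ZMod p) {N : ℕ} (hN : N ≤ p - 1) :
    Tsm p (fun m => (m : ZMod p)⁻¹ * Psm p f m) N
      = ∑ M ∈ Icc 1 N, (M : ZMod p)⁻¹ * (Tsm p f M - Tsm p f (M - 1)) := by
  have hL : Tsm p (fun m => (m : ZMod p)⁻¹ * Psm p f m) N
      = ∑ k ∈ Icc 1 N, (f k
          * ∑ m ∈ Icc k N, (-1 : ZMod p) ^ (m + 1) * (N.choose m : ZMod p) * (m : ZMod p)⁻¹) := by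
    unfold Tsm Psm
    have h1 : ∀ m ∈ Icc 1 N, (-1 : ZMod p) ^ (m + 1) * (N.choose m : ZMod p)
          * ((m : ZMod p)⁻¹ * ∑ k ∈ Icc 1 m, f k)
        = ∑ k ∈ Icc 1 m, f k * ((-1 : ZMod p) ^ (m + 1) * (N.choose m : ZMod p) * (m : ZMod p)⁻¹) := by
      intro m _
      simp only [Finset.mul_sum]
      exact Finset.sum_congr rfl fun k _ => by ring
    rw [Finset.sum_congr rfl h1, sum_Icc_swap]
    exact Finset.sum_congr rfl fun k _ => by rw [← Finset.mul_sum]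
  have hR : ∑ M ∈ Icc 1 N, (M : ZMod p)⁻¹ * (Tsm p f M - Tsm p f (M - 1))
      = ∑ k ∈ Icc 1 N, (f k * ((-1 : ZMod p) ^ (k + 1)
          * ∑ M ∈ Icc k N, (M : ZMod p)⁻¹ * (((M - 1).choose (k - 1) : ℕ) : ZMod p))) := by
    have h1 : ∀ M ∈ Icc 1 N, (M : ZMod p)⁻¹ * (Tsm p f M - Tsm p f (M - 1))
        = ∑ m ∈ Icc 1 M, f m * ((-1 : ZMod p) ^ (m + 1) * ((M : ZMod p)⁻¹
            * (((M - 1).choose (m - 1) : ℕ) : ZMod p))) := by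
      intro M hM
      rw [mem_Icc] at hM
      obtain ⟨M0, rfl⟩ : ∃ M0, M = M0 + 1 := ⟨M - 1, by omega⟩
      simp only [Nat.add_sub_cancel]
      rw [Tdiff p f M0, Finset.mul_sum]
      exact Finset.sum_congr rfl fun m _ => by ring
    rw [Finset.sum_congr rfl h1, sum_Icc_swap]
    refine Finset.sum_congr rfl fun k _ => ?_
    simp only [Finset.mul_sum]
  rw [hL, hR]
  refine Finset.sum_congr rfl fun k hk => ?_
  rw [mem_Icc] at hk
  rw [sumC2 p hk.1 hk.2 hN]

lemma Tone {M : ℕ} (hM : 1 ≤ M) : Tsm p (fun _ => (1 : ZMod p)) M = 1 := by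
  unfold Tsm
  simp only [mul_one]
  rw [altsum p le_rfl hM]
  norm_num [Nat.choose_zero_right]

/-- Main duality induction. -/
lemma mainT : ∀ (s : List Bool) {N : ℕ}, N ≤ p - 1 →
    Tsm p (phiW p s) N = Psm p (phiW p (s.map not)) N := by
  intro s
  induction s with
  | nil =>
    intro N hN
    show Tsm p (fun m => (m : ZMod p)⁻¹) N = _
    have h0 : Tsm p (fun m => (m : ZMod p)⁻¹ * (fun _ => (1:ZMod p)) m) N
        = ∑ M ∈ Icc 1 N, (M : ZMod p)⁻¹ * Tsm p (fun _ => (1:ZMod p)) M := lemL1 p _ hN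
    simp only [mul_one] at h0
    rw [h0]
    unfold Psm
    refine Finset.sum_congr rfl fun M hM => ?_
    rw [mem_Icc] at hM
    rw [Tone p hM.1, mul_one]
    rfl
  | cons b s ih =>
    intro N hN
    cases b with
    | false =>
      show Tsm p (fun m => (m : ZMod p)⁻¹ * phiW p s m) N = _
      rw [lemL1 p _ hN]
      unfold Psm
      refine Finset.sum_congr rfl fun M hM => ?_
      rw [mem_Icc] at hM
      rw [ih (by omega)]
      rfl
    | true =>
      show Tsm p (fun m => (m : ZMod p)⁻¹ * Psm p (phiW p s) m) N = _
      rw [lemL2 p _ hN]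
      have h1 : ∀ M ∈ Icc 1 N, (M : ZMod p)⁻¹ * (Tsm p (phiW p s) M - Tsm p (phiW p s) (M - 1))
          = (M : ZMod p)⁻¹ * phiW p (s.map not) M := by
        intro M hM
        rw [mem_Icc] at hM
        obtain ⟨M0, rfl⟩ : ∃ M0, M = M0 + 1 := ⟨M - 1, by omega⟩
        rw [ih (by omega)]
        have h2 : Tsm p (phiW p s) (M0 + 1 - 1) = Psm p (phiW p (s.map not)) (M0 + 1 - 1) :=
          ih (by omega)
        simp only [Nat.add_sub_cancel] at h2 ⊢
        rw [h2]
        congr 1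
        unfold Psm
        rw [Finset.sum_Icc_succ_top (by omega)]
        ring
      rw [Finset.sum_congr rfl h1]
      rfl

lemma choose_sub_one {m : ℕ} (hm : m ≤ p - 1) :
    (((p - 1).choose m : ℕ) : ZMod p) = (-1 : ZMod p) ^ m := by
  haveI : NeZero p := ⟨hp.out.ne_zero⟩
  induction m with
  | zero => simp
  | succ m ih =>
    have hm' : m ≤ p - 1 := by omega
    have hps : p - 1 + 1 = p := by have := hp.out.two_le; omega
    have hP : ((p.choose (m + 1) : ℕ) : ZMod p) = 0 := by
      rw [ZMod.natCast_eq_zero_iff]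
      exact hp.out.dvd_choose_self (by omega) (by omega)
    have hsucc : p.choose (m + 1) = (p - 1).choose m + (p - 1).choose (m + 1) := by
      conv_lhs => rw [← hps]
      exact Nat.choose_succ_succ _ _
    rw [hsucc] at hP
    push_cast at hP
    rw [ih hm'] at hP
    linear_combination hP

lemma Tneg (f : ℕ → ZMod p) : Tsm p f (p - 1) = - Psm p f (p - 1) := by
  unfold Tsm Psm
  rw [← Finset.sum_neg_distrib]
  refine Finset.sum_congr rfl fun m hm => ?_
  rw [mem_Icc] at hm
  rw [choose_sub_one p hm.2]
  have hodd : Odd (m + 1 + m) := ⟨m, by ring⟩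
  calc (-1 : ZMod p) ^ (m + 1) * (-1 : ZMod p) ^ m * f m
      = (-1 : ZMod p) ^ (m + 1 + m) * f m := by rw [← pow_add]
    _ = - f m := by rw [hodd.neg_one_pow]; ring

/-- The pointwise duality for pattern sums. -/
lemma psm_duality (u : List Bool) :
    Psm p (phiW p u) (p - 1) + Psm p (phiW p (u.map not)) (p - 1) = 0 := by
  have h := mainT p u (le_refl (p - 1))
  rw [Tneg p] at h
  linear_combination -h

/-- The composition associated to a word (head, tail). -/
def compW : List Bool → ℕ × List ℕ
  | [] => (1, [])
  | false :: u => ((compW u).1 + 1, (compW u).2)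
  | true :: u => (1, (compW u).1 :: (compW u).2)

def compL (u : List Bool) : List ℕ := (compW u).1 :: (compW u).2

lemma compW_pos (u : List Bool) : 1 ≤ (compW u).1 ∧ ∀ k ∈ (compW u).2, 1 ≤ k := by
  induction u with
  | nil => exact ⟨le_rfl, by simp [compW]⟩
  | cons b u ih =>
    cases b with
    | false => exact ⟨by simp [compW], by simpa [compW] using ih.2⟩
    | true =>
      refine ⟨le_rfl, ?_⟩
      show ∀ k ∈ (compW u).1 :: (compW u).2, 1 ≤ k
      intro k hk
      rcases List.mem_cons.1 hk with h | h
      · subst h; exact ih.1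
      · exact ih.2 k h

lemma compL_pos (u : List Bool) : ∀ k ∈ compL u, 1 ≤ k := by
  intro k hk
  rcases List.mem_cons.1 hk with h | h
  · subst h; exact (compW_pos u).1
  · exact (compW_pos u).2 k h

lemma phiW_eq (u : List Bool) (m : ℕ) :
    phiW p u m = ((m : ZMod p) ^ (compW u).1)⁻¹ * Nnest p (compW u).2 m := by
  induction u generalizing m with
  | nil =>
    show (m : ZMod p)⁻¹ = ((m : ZMod p) ^ 1)⁻¹ * Nnest p [] m
    rw [pow_one]
    show (m : ZMod p)⁻¹ = (m : ZMod p)⁻¹ * 1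
    rw [mul_one]
  | cons b u ih =>
    cases b with
    | false =>
      show (m : ZMod p)⁻¹ * phiW p u m = ((m : ZMod p) ^ ((compW u).1 + 1))⁻¹ * Nnest p (compW u).2 m
      rw [ih, pow_succ, mul_inv_rev, mul_assoc]
    | true =>
      show (m : ZMod p)⁻¹ * Psm p (phiW p u) m
        = ((m : ZMod p) ^ 1)⁻¹ * Nnest p ((compW u).1 :: (compW u).2) m
      rw [pow_one]
      congr 1
      show Psm p (phiW p u) m = ∑ j ∈ Finset.Icc 1 m, (((j : ZMod p)) ^ (compW u).1)⁻¹ * Nnest p (compW u).2 j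
      unfold Psm
      exact Finset.sum_congr rfl fun j _ => ih j

lemma psm_eq_nnest (u : List Bool) (b : ℕ) :
    Psm p (phiW p u) b = Nnest p (compL u) b := by
  show _ = ∑ m ∈ Finset.Icc 1 b, (((m : ZMod p)) ^ (compW u).1)⁻¹ * Nnest p (compW u).2 m
  unfold Psm
  exact Finset.sum_congr rfl fun m _ => phiW_eq p u m

lemma fin_bridge : ∀ (ks : List ℕ) (b : ℕ), b ≤ p - 1 →
    (∑ n : Fin ks.length → Fin p,
      if (∀ i, 0 < (n i : ℕ)) ∧
          (∀ i j : Fin ks.length, i < j → (n j : ℕ) ≤ (n i : ℕ)) ∧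
          (∀ i, (n i : ℕ) ≤ b) then
        ∏ i, (((n i : ℕ) : ZMod p) ^ ks.get i)⁻¹
      else 0)
      = Nnest p ks b := by
  intro ks
  induction ks with
  | nil =>
    intro b _
    haveI : IsEmpty (Fin ([] : List ℕ).length) := ⟨fun i => i.elim0⟩
    haveI : Unique (Fin ([] : List ℕ).length → Fin p) := Pi.uniqueOfIsEmpty _
    rw [Fintype.sum_unique]
    rw [if_pos ⟨fun i => i.elim0, fun i => i.elim0, fun i => i.elim0⟩]
    exact Finset.prod_of_isEmpty _
  | cons k ks ih =>
    intro b hb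
    haveI : NeZero p := ⟨hp.out.ne_zero⟩
    have hbp : b < p := by have := hp.out.two_le; omega
    have hsplit : ∀ m : Fin p,
        (∑ t : Fin ks.length → Fin p,
          if (∀ i, 0 < ((Fin.cons m t : Fin (ks.length + 1) → Fin p) i : ℕ)) ∧
              (∀ i j : Fin (ks.length + 1), i < j →
                ((Fin.cons m t : Fin (ks.length + 1) → Fin p) j : ℕ)
                  ≤ ((Fin.cons m t : Fin (ks.length + 1) → Fin p) i : ℕ)) ∧
              (∀ i, ((Fin.cons m t : Fin (ks.length + 1) → Fin p) i : ℕ) ≤ b) then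
            ∏ i : Fin (ks.length + 1),
              ((((Fin.cons m t : Fin (ks.length + 1) → Fin p) i : ℕ) : ZMod p) ^ (k :: ks).get i)⁻¹
          else 0)
        = if 1 ≤ (m : ℕ) ∧ (m : ℕ) ≤ b then ((m : ZMod p) ^ k)⁻¹ * Nnest p ks (m : ℕ) else 0 := by
      intro m
      by_cases hm : 1 ≤ (m : ℕ) ∧ (m : ℕ) ≤ b
      · rw [if_pos hm, ← ih (m : ℕ) (by omega), Finset.mul_sum]
        refine Finset.sum_congr rfl fun t _ => ?_
        have hcond : ((∀ i, 0 < ((Fin.cons m t : Fin (ks.length + 1) → Fin p) i : ℕ)) ∧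
              (∀ i j : Fin (ks.length + 1), i < j →
                ((Fin.cons m t : Fin (ks.length + 1) → Fin p) j : ℕ)
                  ≤ ((Fin.cons m t : Fin (ks.length + 1) → Fin p) i : ℕ)) ∧
              (∀ i, ((Fin.cons m t : Fin (ks.length + 1) → Fin p) i : ℕ) ≤ b))
            ↔ ((∀ i, 0 < (t i : ℕ)) ∧
              (∀ i j : Fin ks.length, i < j → (t j : ℕ) ≤ (t i : ℕ)) ∧
              (∀ i, (t i : ℕ) ≤ (m : ℕ))) := by
          constructor
          · rintro ⟨h1, h2, h3⟩
            refine ⟨fun i => ?_, fun i j hij => ?_, fun i => ?_⟩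
            · have := h1 i.succ; rwa [Fin.cons_succ] at this
            · have := h2 i.succ j.succ (by rwa [Fin.succ_lt_succ_iff])
              rwa [Fin.cons_succ, Fin.cons_succ] at this
            · have := h2 0 i.succ (Fin.succ_pos i)
              rwa [Fin.cons_succ, Fin.cons_zero] at this
          · rintro ⟨h1, h2, h3⟩
            refine ⟨fun i => ?_, fun i j hij => ?_, fun i => ?_⟩
            · refine Fin.cases ?_ ?_ i
              · rw [Fin.cons_zero]; omega
              · intro i'; rw [Fin.cons_succ]; exact h1 i'
            · refine Fin.cases ?_ ?_ j hij
              · intro hij0; exact absurd hij0 (Fin.not_lt_zero _)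
              · intro j' hij'
                refine Fin.cases ?_ ?_ i hij'
                · intro _; rw [Fin.cons_zero, Fin.cons_succ]; exact h3 j'
                · intro i' hii'
                  rw [Fin.cons_succ, Fin.cons_succ]
                  exact h2 i' j' (by rwa [Fin.succ_lt_succ_iff] at hii')
            · refine Fin.cases ?_ ?_ i
              · rw [Fin.cons_zero]; omega
              · intro i'; rw [Fin.cons_succ]; exact le_trans (h3 i') hm.2
        rw [if_congr hcond rfl rfl]
        by_cases ht : (∀ i, 0 < (t i : ℕ)) ∧
            (∀ i j : Fin ks.length, i < j → (t j : ℕ) ≤ (t i : ℕ)) ∧ (∀ i, (t i : ℕ) ≤ (m : ℕ))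
        · rw [if_pos ht, if_pos ht, Fin.prod_univ_succ, Fin.cons_zero]
          refine congrArg₂ (· * ·) rfl (Finset.prod_congr rfl fun i _ => ?_)
          rw [Fin.cons_succ]
          rfl
        · rw [if_neg ht, if_neg ht, mul_zero]
      · rw [if_neg hm]
        refine Finset.sum_eq_zero fun t _ => ?_
        rw [if_neg]
        rintro ⟨h1, h2, h3⟩
        have hp0 := h1 0
        have hpb := h3 0
        rw [Fin.cons_zero] at hp0 hpb
        exact hm ⟨hp0, hpb⟩
    calc (∑ n : Fin (ks.length + 1) → Fin p,
          if (∀ i, 0 < (n i : ℕ)) ∧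
              (∀ i j : Fin (ks.length + 1), i < j → (n j : ℕ) ≤ (n i : ℕ)) ∧
              (∀ i, (n i : ℕ) ≤ b) then
            ∏ i, (((n i : ℕ) : ZMod p) ^ (k :: ks).get i)⁻¹
          else 0)
        = ∑ m : Fin p, if 1 ≤ (m : ℕ) ∧ (m : ℕ) ≤ b then
            ((m : ZMod p) ^ k)⁻¹ * Nnest p ks (m : ℕ) else 0 := by
          rw [← Equiv.sum_comp (Fin.consEquiv (fun _ : Fin (ks.length + 1) => Fin p))
            (ι := Fin p × (Fin ks.length → Fin p))]
          rw [Fintype.sum_prod_type]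
          exact Finset.sum_congr rfl fun m _ => hsplit m
      _ = ∑ m ∈ Finset.range p,
            (if 1 ≤ m ∧ m ≤ b then ((m : ZMod p) ^ k)⁻¹ * Nnest p ks m else 0) :=
          Fin.sum_univ_eq_sum_range
            (fun m => if 1 ≤ m ∧ m ≤ b then ((m : ZMod p) ^ k)⁻¹ * Nnest p ks m else 0) p
      _ = ∑ m ∈ Icc 1 b, ((m : ZMod p) ^ k)⁻¹ * Nnest p ks m := by
          rw [Finset.sum_congr rfl (fun m (_ : m ∈ range p) =>
            (if_congr (Iff.symm Finset.mem_Icc) rfl rfl :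
              (if 1 ≤ m ∧ m ≤ b then ((m : ZMod p) ^ k)⁻¹ * Nnest p ks m else 0)
              = if m ∈ Icc 1 b then ((m : ZMod p) ^ k)⁻¹ * Nnest p ks m else 0))]
          rw [Finset.sum_ite_mem]
          congr 1
          rw [Finset.inter_eq_right]
          intro m hm
          rw [mem_Icc] at hm
          rw [Finset.mem_range]
          omega
      _ = Nnest p (k :: ks) b := rfl

end part2

lemma zsum_eq (p : ℕ) [hp : Fact p.Prime] (ks : List ℕ) :
    (∑ n : Fin ks.length → Fin p,
      if (∀ i, 0 < (n i : ℕ)) ∧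
          (∀ i j : Fin ks.length, i < j → (n j : ℕ) ≤ (n i : ℕ)) then
        ∏ i, (((n i : ℕ) : ZMod p) ^ ks.get i)⁻¹
      else 0) = Nnest p ks (p - 1) := by
  rw [← fin_bridge p ks (p - 1) le_rfl]
  refine Finset.sum_congr rfl fun n _ => if_congr ?_ rfl rfl
  constructor
  · rintro ⟨h1, h2⟩
    refine ⟨h1, h2, fun i => ?_⟩
    have h3 := (n i).is_lt
    have h4 := hp.out.two_le
    omega
  · rintro ⟨h1, h2, _⟩
    exact ⟨h1, h2⟩

/-! ### Algebraic preliminaries: monomials and words -/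

def gen (b : Bool) : H := if b then y else x

def mono (u : List Bool) : H := (u.map gen).prod

lemma mono_nil : mono [] = 1 := rfl

lemma mono_cons (b : Bool) (u : List Bool) : mono (b :: u) = gen b * mono u := by
  simp [mono]

lemma mono_append (u v : List Bool) : mono (u ++ v) = mono u * mono v := by
  simp [mono]

lemma span_mono (a : H) : a ∈ Submodule.span ℚ (Set.range mono) := by
  refine FreeAlgebra.induction ℚ (Fin 2) ?_ ?_ ?_ ?_ a
  · intro r
    rw [Algebra.algebraMap_eq_smul_one]
    exact Submodule.smul_mem _ r (Submodule.subset_span ⟨[], rfl⟩)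
  · intro i
    fin_cases i
    · exact Submodule.subset_span ⟨[false], by simp [mono, gen, x]⟩
    · exact Submodule.subset_span ⟨[true], by simp [mono, gen, y]⟩
  · intro a b ha hb
    refine Submodule.span_induction (p := fun a _ => a * b ∈ Submodule.span ℚ (Set.range mono))
      ?_ ?_ ?_ ?_ ha
    · rintro _ ⟨u, rfl⟩
      refine Submodule.span_induction
        (p := fun b _ => mono u * b ∈ Submodule.span ℚ (Set.range mono)) ?_ ?_ ?_ ?_ hb
      · rintro _ ⟨v, rfl⟩
        exact Submodule.subset_span ⟨u ++ v, mono_append u v⟩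
      · rw [mul_zero]; exact Submodule.zero_mem _
      · intro c d _ _ hc hd
        rw [mul_add]; exact Submodule.add_mem _ hc hd
      · intro r c _ hc
        rw [mul_smul_comm]; exact Submodule.smul_mem _ r hc
    · rw [zero_mul]; exact Submodule.zero_mem _
    · intro c d _ _ hc hd
      rw [add_mul]; exact Submodule.add_mem _ hc hd
    · intro r c _ hc
      rw [smul_mul_assoc]; exact Submodule.smul_mem _ r hc
  · intro a b ha hb
    exact Submodule.add_mem _ ha hb

lemma zword_cons (k : ℕ) (ks : List ℕ) : zword (k :: ks) = zk k * zword ks := by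
  simp [zword]

lemma mono_mul_y (u : List Bool) : mono u * y = zword (compL u) := by
  induction u with
  | nil =>
    show mono [] * y = zword [1]
    rw [mono_nil, one_mul, zword_cons]
    show y = zk 1 * zword []
    show y = zk 1 * 1
    rw [mul_one]
    show y = x ^ (1 - 1) * y
    rw [pow_zero, one_mul]
  | cons b u ih =>
    cases b with
    | false =>
      have hpos := (compW_pos u).1
      obtain ⟨h0, hh⟩ : ∃ h0, (compW u).1 = h0 + 1 := ⟨(compW u).1 - 1, by omega⟩
      show (gen false * mono u) * y = zword (((compW u).1 + 1) :: (compW u).2)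
      have hgen : gen false = x := rfl
      rw [hgen, mul_assoc, ih]
      show x * zword ((compW u).1 :: (compW u).2) = _
      rw [zword_cons, zword_cons, hh]
      rw [← mul_assoc]
      congr 1
      show x * zk (h0 + 1) = zk (h0 + 1 + 1)
      unfold zk
      simp only [Nat.add_sub_cancel]
      rw [← mul_assoc, ← pow_succ']
    | true =>
      show (gen true * mono u) * y = zword (1 :: (compW u).1 :: (compW u).2)
      have hgen : gen true = y := rfl
      rw [hgen, mul_assoc, ih]
      rw [zword_cons]
      congr 1
      show y = x ^ (1 - 1) * y
      rw [pow_zero, one_mul]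

lemma alpha_gen (b : Bool) : alphaHom (gen b) = gen (!b) := by
  cases b
  · show alphaHom x = y
    unfold alphaHom x
    rw [FreeAlgebra.lift_ι_apply]
    rfl
  · show alphaHom y = x
    unfold alphaHom y
    rw [FreeAlgebra.lift_ι_apply]
    rfl

lemma alpha_mono (u : List Bool) : alphaHom (mono u) = mono (u.map not) := by
  induction u with
  | nil => rw [mono_nil, map_one]; rfl
  | cons b u ih =>
    rw [mono_cons, map_mul, alpha_gen, ih]
    rfl

/-! ### Duality for `zetaAStar` -/

lemma zetaAStar_add_dual (u : List Bool) :
    zetaAStar (compL u) + zetaAStar (compL (u.map not)) = 0 := by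
  unfold zetaAStar
  rw [← map_add]
  have hfun : (fun (p : Nat.Primes) =>
      (∑ n : Fin (compL u).length → Fin p,
        if (∀ i, 0 < ((n i : ℕ))) ∧
            (∀ i j : Fin (compL u).length, i < j → (n j : ℕ) ≤ (n i : ℕ)) then
          ∏ i, (((n i : ℕ) : ZMod p) ^ (compL u).get i)⁻¹
        else 0)
      + ∑ n : Fin (compL (u.map not)).length → Fin p,
        if (∀ i, 0 < ((n i : ℕ))) ∧
            (∀ i j : Fin (compL (u.map not)).length, i < j → (n j : ℕ) ≤ (n i : ℕ)) then
          ∏ i, (((n i : ℕ) : ZMod p) ^ (compL (u.map not)).get i)⁻¹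
        else 0) = (fun _ => 0) := by
    funext q
    haveI : Fact (q : ℕ).Prime := ⟨q.2⟩
    rw [zsum_eq (q : ℕ) (compL u), zsum_eq (q : ℕ) (compL (u.map not)),
      ← psm_eq_nnest (q : ℕ) u, ← psm_eq_nnest (q : ℕ) (u.map not)]
    exact psm_duality (q : ℕ) u
  show Ideal.Quotient.mk finSupportIdeal (_ + _) = 0
  have : ((fun (q : Nat.Primes) =>
      ∑ n : Fin (compL u).length → Fin q,
        if (∀ i, 0 < ((n i : ℕ))) ∧
            (∀ i j : Fin (compL u).length, i < j → (n j : ℕ) ≤ (n i : ℕ)) then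
          ∏ i, (((n i : ℕ) : ZMod q) ^ (compL u).get i)⁻¹
        else 0)
      + (fun (q : Nat.Primes) =>
      ∑ n : Fin (compL (u.map not)).length → Fin q,
        if (∀ i, 0 < ((n i : ℕ))) ∧
            (∀ i j : Fin (compL (u.map not)).length, i < j → (n j : ℕ) ≤ (n i : ℕ)) then
          ∏ i, (((n i : ℕ) : ZMod q) ^ (compL (u.map not)).get i)⁻¹
        else 0)) = 0 := hfun
  rw [this, map_zero]

set_option maxHeartbeats 1000000 in
set_option synthInstance.maxHeartbeats 200000 in
/-- **Star duality for `𝒜`-finite multiple zeta-star values** (Hoffman, Jarossay).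
For every `w ∈ 𝔥y`, one has `Z_𝒜⋆(w) = −Z_𝒜⋆(α̃(w))`. -/
theorem star_duality_fmzv_A
    (Zs : H →ₗ[ℚ] Acal) (hZsone : Zs 1 = 1)
    (hZs : ∀ ks : List ℕ, (∀ k ∈ ks, 1 ≤ k) → Zs (zword ks) = zetaAStar ks)
    (alphaTilde : H →ₗ[ℚ] H)
    (halphaTilde : ∀ u : H, alphaTilde (u * y) = alphaHom u * y)
    (w : H) (v : H) (hw : w = v * y) :
    Zs w = -Zs (alphaTilde w) := by
  subst hw
  rw [halphaTilde]
  have hv := span_mono v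
  induction hv using Submodule.span_induction with
  | mem a ha =>
    obtain ⟨u, rfl⟩ := ha
    rw [mono_mul_y, alpha_mono, mono_mul_y, hZs _ (compL_pos u), hZs _ (compL_pos (u.map not))]
    have h := zetaAStar_add_dual u
    linear_combination h
  | zero =>
    rw [zero_mul, map_zero, map_zero, zero_mul, map_zero, neg_zero]
  | add a b _ _ iha ihb =>
    rw [add_mul, map_add, map_add, add_mul, map_add, iha, ihb]
    ring
  | smul r a _ ih =>
    rw [smul_mul_assoc, map_smul, map_smul, smul_mul_assoc, map_smul, ih, smul_neg]

end FMZVNote
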